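/- (Theorem 2: limiting norm of Jacobian products.) Let (z_t)_{t\ge 1} be an orbit of the regularized PLRNN, i.e. z_{t+1} = F(z_t), fix t \ge 1, and suppose: (i) there is a constant c < 1 with \|R(z_k)\|_2 \le c for all k > t; (ii) there exists N > t and a fixed diagonal 0–1 matrix D^* of size M_{reg} and a matrix R^* with D_{reg}(z_k) = D^* for all k \ge N and R(z_k) \to R^* as k \to \infty. Then, as T \to \infty, the ordered product W_\Omega(z_T)\, W_\Omega(z_{T-1}) \cdots W_\Omega(z_{t+1}) converges to the block matrix [[I_{M_{reg}}, 0], [Q^*, 0]] with Q^* = (I - R^*)^{-1} S D^*, and \|W_\Omega(z_T) \cdots W_\Omega(z_{t+1})\|_2 \to \sqrt{\lambda_{max}(I_{M_{reg}} + (Q^*)^{\mathsf T} Q^*)} \ge 1. -/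

import Mathlib

open Matrix Filter Topology

/-- The operator 2-norm (largest singular value) of a real matrix. -/
noncomputable def opNorm2 {m n : Type*} [Fintype m] [Fintype n] [DecidableEq n]
    (A : Matrix m n ℝ) : ℝ :=
  ‖LinearMap.toContinuousLinearMap (Matrix.toEuclideanLin (𝕜 := ℝ) A)‖

/-- Euclidean norm of a real vector. -/
noncomputable def vnorm {n : Type*} [Fintype n] (v : n → ℝ) : ℝ :=
  Real.sqrt (∑ i, v i ^ 2)

/-- Componentwise ReLU. -/
noncomputable def relu {n : Type*} (z : n → ℝ) : n → ℝ := fun i => max 0 (z i)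

/-- `Dmat z` is the diagonal 0–1 matrix with `(Dmat z) i i = 1` iff `z i > 0`. -/
noncomputable def Dmat {n : Type*} [Fintype n] [DecidableEq n] (z : n → ℝ) :
    Matrix n n ℝ :=
  Matrix.diagonal (fun i => if 0 < z i then (1 : ℝ) else 0)

/-- `W_Ω(z) = A + W D(z)`. -/
noncomputable def Wom {n : Type*} [Fintype n] [DecidableEq n]
    (A W : Matrix n n ℝ) (z : n → ℝ) : Matrix n n ℝ :=
  A + W * Dmat z

/-- The deterministic, input-free PLRNN map `F(z) = A z + W φ(z) + h`. -/
noncomputable def plrnn {n : Type*} [Fintype n] [DecidableEq n]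
    (A W : Matrix n n ℝ) (h : n → ℝ) (z : n → ℝ) : n → ℝ :=
  A.mulVec z + W.mulVec (relu z) + h

/-- The largest (real) eigenvalue of a real square matrix, as the supremum of its real
spectrum. -/
noncomputable def lambdaMax {n : Type*} [Fintype n] [DecidableEq n] (A : Matrix n n ℝ) : ℝ :=
  sSup (spectrum ℝ A)

/-! ### Auxiliary lemmas -/

open scoped Matrix.Norms.L2Operator

section NormLemmas

set_option linter.unusedSectionVars false

variable {n : Type*} [Fintype n] [DecidableEq n]

lemma opNorm2_eq_norm {m n : Type*} [Fintype m] [Fintype n] [DecidableEq n]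
    (A : Matrix m n ℝ) : opNorm2 A = ‖A‖ := rfl

lemma euc_norm_eq (y : EuclideanSpace ℝ n) : ‖y‖ = Real.sqrt (∑ i, (y i)^2) := by
  rw [EuclideanSpace.norm_eq]
  congr 1
  refine Finset.sum_congr rfl fun i _ => ?_
  rw [Real.norm_eq_abs, sq_abs]

lemma toEuclideanCLM_apply_coord (A : Matrix n n ℝ) (x : EuclideanSpace ℝ n) (i : n) :
    (Matrix.toEuclideanCLM (𝕜 := ℝ) A x) i = (A *ᵥ (fun j => x j)) i := rfl

lemma l2_opNorm_diagonal_le (d : n → ℝ) (b : ℝ) (hb : 0 ≤ b) (hd : ∀ i, |d i| ≤ b) :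
    ‖Matrix.diagonal d‖ ≤ b := by
  rw [Matrix.cstar_norm_def]
  refine ContinuousLinearMap.opNorm_le_bound _ hb fun x => ?_
  rw [euc_norm_eq, euc_norm_eq]
  rw [← Real.sqrt_sq hb, ← Real.sqrt_mul (by positivity)]
  apply Real.sqrt_le_sqrt
  rw [Finset.mul_sum]
  refine Finset.sum_le_sum fun i _ => ?_
  rw [toEuclideanCLM_apply_coord, Matrix.mulVec_diagonal]
  have := hd i
  calc (d i * x i)^2 = (|d i|)^2 * (x i)^2 := by rw [mul_pow, sq_abs]
  _ ≤ b^2 * (x i)^2 :=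
    mul_le_mul_of_nonneg_right (pow_le_pow_left₀ (abs_nonneg _) this 2) (sq_nonneg _)

lemma le_l2_opNorm_diagonal (d : n → ℝ) (i : n) : |d i| ≤ ‖Matrix.diagonal d‖ := by
  rw [Matrix.cstar_norm_def]
  have h2 := ContinuousLinearMap.le_opNorm
    (Matrix.toEuclideanCLM (𝕜 := ℝ) (Matrix.diagonal d)) (EuclideanSpace.single i 1)
  rw [EuclideanSpace.norm_single, norm_one, mul_one] at h2
  refine le_trans (le_of_eq ?_) h2
  rw [euc_norm_eq]
  have h3 : ∀ j, ((Matrix.toEuclideanCLM (𝕜 := ℝ) (Matrix.diagonal d))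
      (EuclideanSpace.single i 1) j) = d j * (EuclideanSpace.single i (1:ℝ)) j := by
    intro j
    rw [toEuclideanCLM_apply_coord, Matrix.mulVec_diagonal]
  rw [Finset.sum_congr rfl (fun j _ => by rw [h3 j])]
  have h4 : ∀ j, (d j * (EuclideanSpace.single i (1:ℝ)) j)^2 = if j = i then (d i)^2 else 0 := by
    intro j
    by_cases hj : j = i
    · subst hj; simp [EuclideanSpace.single_apply]
    · simp [EuclideanSpace.single_apply, hj]
  rw [Finset.sum_congr rfl (fun j _ => h4 j), Finset.sum_ite_eq' Finset.univ i (fun _ => (d i)^2)]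
  simp [Real.sqrt_sq_eq_abs]

lemma psd_norm_eq_sSup_spectrum [Nonempty n] {X : Matrix n n ℝ} (hX : X.PosSemidef) :
    ‖X‖ = sSup (spectrum ℝ X) := by
  have hH : X.IsHermitian := hX.1
  have hspec : spectrum ℝ X = Set.range hH.eigenvalues := hH.spectrum_real_eq_range_eigenvalues
  obtain ⟨i₀, hi₀⟩ := Finite.exists_max hH.eigenvalues
  have hnn : ∀ i, 0 ≤ hH.eigenvalues i := hX.eigenvalues_nonneg
  have hsup : sSup (spectrum ℝ X) = hH.eigenvalues i₀ := by
    rw [hspec]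
    apply le_antisymm
    · exact csSup_le (Set.range_nonempty _) (by rintro x ⟨i, rfl⟩; exact hi₀ i)
    · exact le_csSup (Set.finite_range _).bddAbove ⟨i₀, rfl⟩
  rw [hsup]
  have hnorm : ‖X‖ = ‖Matrix.diagonal hH.eigenvalues‖ := by
    conv_lhs => rw [hH.spectral_theorem]
    rw [Unitary.conjStarAlgAut_apply, ← Unitary.coe_star]
    rw [CStarRing.norm_mul_coe_unitary, CStarRing.norm_coe_unitary_mul]
    congr 1
  rw [hnorm]
  apply le_antisymm
  · exact l2_opNorm_diagonal_le _ _ (hnn i₀)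
      (fun i => by rw [abs_of_nonneg (hnn i)]; exact hi₀ i)
  · have := le_l2_opNorm_diagonal hH.eigenvalues i₀
    rwa [abs_of_nonneg (hnn i₀)] at this

lemma spectrum_fromBlocks_diag {p' q' : Type*} [Fintype p'] [Fintype q'] [DecidableEq p']
    [DecidableEq q'] (X : Matrix p' p' ℝ) (Y : Matrix q' q' ℝ) :
    spectrum ℝ (Matrix.fromBlocks X 0 0 Y) = spectrum ℝ X ∪ spectrum ℝ Y := by
  ext μ
  simp only [spectrum.mem_iff, Set.mem_union]
  have halg : algebraMap ℝ (Matrix (p' ⊕ q') (p' ⊕ q') ℝ) μ - Matrix.fromBlocks X 0 0 Y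
      = Matrix.fromBlocks (algebraMap ℝ (Matrix p' p' ℝ) μ - X) 0 0
        (algebraMap ℝ (Matrix q' q' ℝ) μ - Y) := by
    ext (i | i) (j | j) <;>
      simp [Matrix.algebraMap_matrix_apply, Matrix.fromBlocks, Sum.elim, apply_ite]
  rw [halg, Matrix.isUnit_iff_isUnit_det, Matrix.det_fromBlocks_zero₂₁, IsUnit.mul_iff,
    ← Matrix.isUnit_iff_isUnit_det, ← Matrix.isUnit_iff_isUnit_det]
  tauto

lemma norm_fromBlocks_eq {p q : ℕ} (hp : 1 ≤ p) (hq : 1 ≤ q) (Q : Matrix (Fin q) (Fin p) ℝ) :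
    ‖Matrix.fromBlocks (1 : Matrix (Fin p) (Fin p) ℝ) 0 Q (0 : Matrix (Fin q) (Fin q) ℝ)‖
      = Real.sqrt (sSup (spectrum ℝ (1 + Qᵀ * Q)))
    ∧ 1 ≤ Real.sqrt (sSup (spectrum ℝ (1 + Qᵀ * Q))) := by
  haveI : Nonempty (Fin p) := Fin.pos_iff_nonempty.mp hp
  haveI : Nonempty (Fin q) := Fin.pos_iff_nonempty.mp hq
  set M : Matrix (Fin p ⊕ Fin q) (Fin p ⊕ Fin q) ℝ := Matrix.fromBlocks 1 0 Q 0 with hM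
  set X : Matrix (Fin p) (Fin p) ℝ := 1 + Qᵀ * Q with hXdef
  have h1 : Mᴴ * M = Matrix.fromBlocks X 0 0 0 := by
    rw [hM, Matrix.fromBlocks_conjTranspose, Matrix.fromBlocks_multiply]
    rw [Matrix.conjTranspose_eq_transpose_of_trivial]
    simp [hXdef]
  have hQQ : (Qᵀ * Q).PosSemidef := by
    have := Matrix.posSemidef_conjTranspose_mul_self Q
    rwa [Matrix.conjTranspose_eq_transpose_of_trivial] at this
  have hX : X.PosSemidef := (Matrix.PosSemidef.one).add hQQ
  have hshift : ∀ μ : ℝ, μ ∈ spectrum ℝ X ↔ (μ - 1) ∈ spectrum ℝ (Qᵀ * Q) := by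
    intro μ
    simp only [spectrum.mem_iff]
    have : algebraMap ℝ (Matrix (Fin p) (Fin p) ℝ) μ - X
        = algebraMap ℝ (Matrix (Fin p) (Fin p) ℝ) (μ - 1) - Qᵀ * Q := by
      rw [Algebra.algebraMap_eq_smul_one, Algebra.algebraMap_eq_smul_one, sub_smul, one_smul,
        hXdef]
      abel
    rw [this]
  have hone_le : ∀ μ ∈ spectrum ℝ X, (1:ℝ) ≤ μ := by
    intro μ hμ
    have h2 := (hshift μ).mp hμ
    rw [hQQ.1.spectrum_real_eq_range_eigenvalues] at h2
    obtain ⟨i, hi⟩ := h2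
    have := hQQ.eigenvalues_nonneg i
    rw [hi] at this
    linarith
  have hXne : (spectrum ℝ X).Nonempty := by
    rw [hX.1.spectrum_real_eq_range_eigenvalues]
    exact Set.range_nonempty _
  have hXbdd : BddAbove (spectrum ℝ X) := by
    rw [hX.1.spectrum_real_eq_range_eigenvalues]
    exact (Set.finite_range _).bddAbove
  have hsup1 : (1:ℝ) ≤ sSup (spectrum ℝ X) := by
    obtain ⟨μ, hμ⟩ := hXne
    exact le_trans (hone_le μ hμ) (le_csSup hXbdd hμ)
  have hMM : ‖Mᴴ * M‖ = sSup (spectrum ℝ X) := by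
    have hpsd : (Mᴴ * M).PosSemidef := Matrix.posSemidef_conjTranspose_mul_self M
    rw [h1] at hpsd ⊢
    rw [psd_norm_eq_sSup_spectrum hpsd, spectrum_fromBlocks_diag,
      spectrum.zero_eq, csSup_union hXbdd hXne (bddAbove_singleton) (Set.singleton_nonempty _),
      csSup_singleton]
    exact sup_eq_left.mpr (by linarith)
  have hnormM : ‖M‖ = Real.sqrt (sSup (spectrum ℝ X)) := by
    rw [← hMM, Matrix.l2_opNorm_conjTranspose_mul_self, Real.sqrt_mul_self (norm_nonneg _)]
  refine ⟨hnormM, ?_⟩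
  calc (1:ℝ) = Real.sqrt 1 := (Real.sqrt_one).symm
  _ ≤ _ := Real.sqrt_le_sqrt hsup1

end NormLemmas

lemma tendsto_zero_of_rec {u ε : ℕ → ℝ} {c : ℝ} (hc0 : 0 ≤ c) (hc1 : c < 1)
    (hu : ∀ n, 0 ≤ u n) (hε : Tendsto ε atTop (𝓝 0))
    (hrec : ∀ᶠ n in atTop, u (n + 1) ≤ c * u n + ε n) :
    Tendsto u atTop (𝓝 0) := by
  rw [Metric.tendsto_atTop]
  intro δ hδ
  have hδ2 : (0:ℝ) < (1 - c) * δ / 2 := by nlinarith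
  obtain ⟨N₁, hN₁⟩ := eventually_atTop.mp (hrec.and (hε.eventually_lt_const hδ2))
  have key : ∀ m, u (N₁ + m) ≤ c ^ m * u N₁ + δ / 2 := by
    intro m
    induction m with
    | zero => simpa using by linarith [hu N₁, hδ]
    | succ m ih =>
      have hn := hN₁ (N₁ + m) (Nat.le_add_right _ _)
      have h3 : u (N₁ + m + 1) ≤ c * (c ^ m * u N₁ + δ / 2) + (1 - c) * δ / 2 := by
        calc u (N₁ + m + 1) ≤ c * u (N₁ + m) + ε (N₁ + m) := hn.1
        _ ≤ c * (c ^ m * u N₁ + δ / 2) + (1 - c) * δ / 2 := by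
          have := mul_le_mul_of_nonneg_left ih hc0
          linarith [hn.2]
      have harr : N₁ + (m + 1) = N₁ + m + 1 := by omega
      rw [harr]
      calc u (N₁ + m + 1) ≤ c * (c ^ m * u N₁ + δ / 2) + (1 - c) * δ / 2 := h3
      _ = c ^ (m + 1) * u N₁ + δ / 2 := by ring
  have h4 : ∀ᶠ m in atTop, c ^ m * u N₁ < δ / 2 := by
    have := (tendsto_pow_atTop_nhds_zero_of_lt_one hc0 hc1).mul_const (u N₁)
    rw [zero_mul] at this
    exact this.eventually_lt_const (by linarith)
  obtain ⟨M, hM⟩ := eventually_atTop.mp h4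
  refine ⟨N₁ + M, fun n hn => ?_⟩
  have h5 : u n ≤ c ^ (n - N₁) * u N₁ + δ / 2 := by
    have := key (n - N₁)
    rwa [Nat.add_sub_cancel' (le_trans (Nat.le_add_right _ _) hn)] at this
  have h6 : c ^ (n - N₁) * u N₁ < δ / 2 := hM _ (by omega)
  rw [Real.dist_eq, sub_zero, abs_of_nonneg (hu n)]
  linarith

lemma wom_blocks {p q : ℕ} (A W : Matrix (Fin p ⊕ Fin q) (Fin p ⊕ Fin q) ℝ)
    (hA : A.IsDiag) (hAreg : ∀ i : Fin p, A (Sum.inl i) (Sum.inl i) = 1)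
    (hWreg : ∀ (i : Fin p) (j : Fin p ⊕ Fin q), W (Sum.inl i) j = 0)
    (v : Fin p ⊕ Fin q → ℝ) :
    Wom A W v = Matrix.fromBlocks 1 0 (W.toBlocks₂₁ * (Dmat v).toBlocks₁₁)
      ((Wom A W v).toBlocks₂₂) := by
  ext i j
  cases i with
  | inl i =>
    cases j with
    | inl j =>
      simp only [Wom, Dmat, Matrix.add_apply, Matrix.mul_apply, hWreg, zero_mul,
        Finset.sum_const_zero, add_zero, Matrix.fromBlocks_apply₁₁]
      by_cases hij : i = j
      · subst hij; simp [hAreg]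
      · rw [Matrix.one_apply_ne hij, hA (by simp [hij])]
    | inr j =>
      simp only [Wom, Dmat, Matrix.add_apply, Matrix.mul_apply, hWreg, zero_mul,
        Finset.sum_const_zero, add_zero, Matrix.fromBlocks_apply₁₂, Matrix.zero_apply]
      exact hA (by simp)
  | inr i =>
    cases j with
    | inl j =>
      set d : (Fin p ⊕ Fin q) → ℝ := fun i => if 0 < v i then (1:ℝ) else 0 with hdd
      have hd : Dmat v = Matrix.diagonal d := rfl
      simp only [Wom, Matrix.add_apply, Matrix.fromBlocks_apply₂₁]
      rw [hA (by simp), zero_add, hd]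
      simp only [Matrix.mul_apply, Matrix.toBlocks₂₁, Matrix.toBlocks₁₁, Matrix.of_apply,
        Fintype.sum_sum_type, Matrix.diagonal_apply]
      simp [Sum.inl.injEq]
    | inr j =>
      simp [Matrix.fromBlocks_apply₂₂, Matrix.toBlocks₂₂]

/-- The ordered product of `R` factors. -/
noncomputable def prodSeq {q : ℕ} (R : ℕ → Matrix (Fin q) (Fin q) ℝ) :
    ℕ → Matrix (Fin q) (Fin q) ℝ
  | 0 => 1
  | n + 1 => R n * prodSeq R n

/-- The affine recursion accumulating the lower-left block. -/
noncomputable def affSeq {p q : ℕ} (B : ℕ → Matrix (Fin q) (Fin p) ℝ)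
    (R : ℕ → Matrix (Fin q) (Fin q) ℝ) : ℕ → Matrix (Fin q) (Fin p) ℝ
  | 0 => 0
  | n + 1 => B n + R n * affSeq B R n

/-- Theorem 2: limiting norm of Jacobian products. In the regularized PLRNN
(states `Fin p ⊕ Fin q`, regularized block `Fin p`), if `‖R(z k)‖₂ ≤ c < 1` for `k > t`,
`D_reg(z k)` is eventually constant `= D*`, and `R(z k) → R*`, then the ordered Jacobian
product `W_Ω(z T) ⋯ W_Ω(z (t+1))` converges to `[[I, 0], [Q*, 0]]` with
`Q* = (I - R*)⁻¹ S D*`, and its operator 2-norm converges to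
`√(λ_max(I + Q*ᵀ Q*)) ≥ 1`. -/
theorem regularized_jacobian_products_limit {p q : ℕ} (hp : 1 ≤ p) (hq : 1 ≤ q)
    (A W : Matrix (Fin p ⊕ Fin q) (Fin p ⊕ Fin q) ℝ)
    (hA : A.IsDiag) (hAreg : ∀ i : Fin p, A (Sum.inl i) (Sum.inl i) = 1)
    (hWd : ∀ i, W i i = 0) (hWreg : ∀ (i : Fin p) (j : Fin p ⊕ Fin q), W (Sum.inl i) j = 0)
    (h : Fin p ⊕ Fin q → ℝ)
    (z : ℕ → Fin p ⊕ Fin q → ℝ) (horb : ∀ t', 1 ≤ t' → z (t' + 1) = plrnn A W h (z t'))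
    (t : ℕ) (ht : 1 ≤ t) (c : ℝ) (hc : c < 1)
    (hR : ∀ k, t < k → opNorm2 ((Wom A W (z k)).toBlocks₂₂) ≤ c)
    (N : ℕ) (hN : t < N) (Dstar : Matrix (Fin p) (Fin p) ℝ)
    (hD : ∀ k, N ≤ k → (Dmat (z k)).toBlocks₁₁ = Dstar)
    (Rstar : Matrix (Fin q) (Fin q) ℝ)
    (hRconv : Tendsto (fun k => (Wom A W (z k)).toBlocks₂₂) atTop (𝓝 Rstar)) :
    Tendsto (fun T => ((List.range (T - t)).map (fun i => Wom A W (z (T - i)))).prod)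
        atTop
        (𝓝 (Matrix.fromBlocks 1 0 ((1 - Rstar)⁻¹ * W.toBlocks₂₁ * Dstar) 0))
    ∧ Tendsto
        (fun T => opNorm2 (((List.range (T - t)).map (fun i => Wom A W (z (T - i)))).prod))
        atTop
        (𝓝 (Real.sqrt (lambdaMax
          (1 + ((1 - Rstar)⁻¹ * W.toBlocks₂₁ * Dstar)ᵀ
            * ((1 - Rstar)⁻¹ * W.toBlocks₂₁ * Dstar)))))
    ∧ 1 ≤ Real.sqrt (lambdaMax
          (1 + ((1 - Rstar)⁻¹ * W.toBlocks₂₁ * Dstar)ᵀ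
            * ((1 - Rstar)⁻¹ * W.toBlocks₂₁ * Dstar))) := by
  classical
  haveI : Nonempty (Fin p) := Fin.pos_iff_nonempty.mp hp
  haveI : Nonempty (Fin q) := Fin.pos_iff_nonempty.mp hq
  set S : Matrix (Fin q) (Fin p) ℝ := W.toBlocks₂₁ with hS
  set Rz : ℕ → Matrix (Fin q) (Fin q) ℝ := fun k => (Wom A W (z k)).toBlocks₂₂ with hRzdef
  set Dk : ℕ → Matrix (Fin p) (Fin p) ℝ := fun k => (Dmat (z k)).toBlocks₁₁ with hDkdef
  set Qstar : Matrix (Fin q) (Fin p) ℝ := (1 - Rstar)⁻¹ * S * Dstar with hQsdef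
  set P : ℕ → Matrix (Fin p ⊕ Fin q) (Fin p ⊕ Fin q) ℝ :=
    fun T => ((List.range (T - t)).map (fun i => Wom A W (z (T - i)))).prod with hPdef
  -- basic norm facts
  have hRn : ∀ k, t < k → ‖Rz k‖ ≤ c := fun k hk => by
    have := hR k hk; rwa [opNorm2_eq_norm] at this
  have hc0 : 0 ≤ c := le_trans (norm_nonneg (Rz (t + 1))) (hRn (t + 1) (by omega))
  have hRsn : ‖Rstar‖ ≤ c :=
    le_of_tendsto hRconv.norm (eventually_atTop.mpr ⟨t + 1, fun k hk => hRn k (by omega)⟩)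
  have hRslt : ‖Rstar‖ < 1 := lt_of_le_of_lt hRsn hc
  have hunit : IsUnit (1 - Rstar) := isUnit_one_sub_of_norm_lt_one hRslt
  have hinv : (1 - Rstar) * (1 - Rstar)⁻¹ = 1 :=
    Matrix.mul_nonsing_inv _ ((Matrix.isUnit_iff_isUnit_det _).mp hunit)
  have hfix : Qstar = S * Dstar + Rstar * Qstar := by
    have h1 : (1 - Rstar) * Qstar = S * Dstar := by
      rw [hQsdef, ← Matrix.mul_assoc, ← Matrix.mul_assoc, hinv, Matrix.one_mul]
    rw [Matrix.sub_mul, Matrix.one_mul] at h1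
    rw [← h1]
    abel
  -- the two recursions
  set Rseq : ℕ → Matrix (Fin q) (Fin q) ℝ := prodSeq (fun m => Rz (t + m + 1)) with hRseqdef
  set Qseq : ℕ → Matrix (Fin q) (Fin p) ℝ :=
    affSeq (fun m => S * Dk (t + m + 1)) (fun m => Rz (t + m + 1)) with hQseqdef
  have hProd : ∀ n, P (t + n) = Matrix.fromBlocks 1 0 (Qseq n) (Rseq n) := by
    intro n
    induction n with
    | zero =>
      have h0 : t + 0 - t = 0 := by omega
      simp only [hPdef, h0, List.range_zero, List.map_nil, List.prod_nil, hRseqdef, hQseqdef,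
        prodSeq, affSeq]
      exact Matrix.fromBlocks_one.symm
    | succ n ih =>
      have hsplit : P (t + (n + 1)) = Wom A W (z (t + n + 1)) * P (t + n) := by
        have h0 : t + (n + 1) - t = n + 1 := by omega
        have h1 : t + n - t = n := by omega
        simp only [hPdef, h0, h1]
        rw [List.range_succ_eq_map, List.map_cons, List.prod_cons, List.map_map]
        have h2 : t + (n + 1) - 0 = t + n + 1 := by omega
        rw [h2]
        congr 1
        congr 1
        apply List.map_congr_left
        intro i _
        simp only [Function.comp_apply]
        have h3 : t + (n + 1) - Nat.succ i = t + n - i := by omega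
        rw [h3]
      rw [hsplit, ih, wom_blocks A W hA hAreg hWreg, Matrix.fromBlocks_multiply]
      have hq1 : Qseq (n + 1) = S * Dk (t + n + 1) + Rz (t + n + 1) * Qseq n := rfl
      have hr1 : Rseq (n + 1) = Rz (t + n + 1) * Rseq n := rfl
      rw [hq1, hr1]
      congr 1 <;> simp <;> rfl
  -- convergence of Rseq to 0
  have hnorm_one : ‖(1 : Matrix (Fin q) (Fin q) ℝ)‖ = 1 := by
    rw [Matrix.cstar_norm_def, _root_.map_one]
    exact ContinuousLinearMap.norm_id
  have hRseq_norm : ∀ n, ‖Rseq n‖ ≤ c ^ n := by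
    intro n
    induction n with
    | zero => simp [hRseqdef, prodSeq, hnorm_one]
    | succ n ih =>
      have h1 : Rseq (n + 1) = Rz (t + n + 1) * Rseq n := rfl
      rw [h1, pow_succ]
      calc ‖Rz (t + n + 1) * Rseq n‖ ≤ ‖Rz (t + n + 1)‖ * ‖Rseq n‖ := norm_mul_le _ _
      _ ≤ c * c ^ n := mul_le_mul (hRn _ (by omega)) ih (norm_nonneg _) hc0
      _ = c ^ n * c := by ring
  have hRseq_tendsto : Tendsto Rseq atTop (𝓝 0) := by
    rw [tendsto_zero_iff_norm_tendsto_zero]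
    exact squeeze_zero (fun n => norm_nonneg _) hRseq_norm
      (tendsto_pow_atTop_nhds_zero_of_lt_one hc0 hc)
  -- convergence of Qseq to Qstar
  have hεt : Tendsto (fun n => ‖Rz (t + n + 1) - Rstar‖ * ‖Qstar‖) atTop (𝓝 0) := by
    have h2 : Tendsto (fun k => ‖Rz k - Rstar‖) atTop (𝓝 0) := by
      have := tendsto_iff_norm_sub_tendsto_zero.mp hRconv
      exact this
    have h3 : Tendsto (fun n : ℕ => t + n + 1) atTop atTop :=
      tendsto_atTop.mpr fun b => eventually_atTop.mpr ⟨b, fun n hn => by omega⟩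
    have h4 := (h2.comp h3).mul_const ‖Qstar‖
    rw [zero_mul] at h4
    exact h4
  have hQbound : ∀ᶠ n in atTop, ‖Qseq (n + 1) - Qstar‖
      ≤ c * ‖Qseq n - Qstar‖ + ‖Rz (t + n + 1) - Rstar‖ * ‖Qstar‖ := by
    filter_upwards [eventually_ge_atTop N] with n hn
    have hB : Dk (t + n + 1) = Dstar := hD _ (by omega)
    have hsplit : Qseq (n + 1) - Qstar
        = Rz (t + n + 1) * (Qseq n - Qstar) + (Rz (t + n + 1) - Rstar) * Qstar := by
      have e1 : Qseq (n + 1) = S * Dstar + Rz (t + n + 1) * Qseq n := by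
        have : Qseq (n + 1) = S * Dk (t + n + 1) + Rz (t + n + 1) * Qseq n := rfl
        rw [this, hB]
      have e2 : Rz (t + n + 1) * (Qseq n - Qstar) + (Rz (t + n + 1) - Rstar) * Qstar
          = Rz (t + n + 1) * Qseq n - Rstar * Qstar := by
        rw [Matrix.mul_sub, Matrix.sub_mul]
        abel
      rw [e1, e2]
      nth_rewrite 1 [hfix]
      abel
    rw [hsplit]
    calc ‖Rz (t + n + 1) * (Qseq n - Qstar) + (Rz (t + n + 1) - Rstar) * Qstar‖
        ≤ ‖Rz (t + n + 1) * (Qseq n - Qstar)‖ + ‖(Rz (t + n + 1) - Rstar) * Qstar‖ :=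
          norm_add_le _ _
    _ ≤ c * ‖Qseq n - Qstar‖ + ‖Rz (t + n + 1) - Rstar‖ * ‖Qstar‖ := by
        apply add_le_add
        · exact le_trans (Matrix.l2_opNorm_mul _ _)
            (mul_le_mul_of_nonneg_right (hRn _ (by omega)) (norm_nonneg _))
        · exact Matrix.l2_opNorm_mul _ _
  have hQnorm : Tendsto (fun n => ‖Qseq n - Qstar‖) atTop (𝓝 0) :=
    tendsto_zero_of_rec hc0 hc (fun n => norm_nonneg _) hεt hQbound
  have hQt : Tendsto Qseq atTop (𝓝 Qstar) := by
    rw [tendsto_iff_norm_sub_tendsto_zero]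
    exact hQnorm
  -- assemble part 1
  have hfb : Tendsto (fun n => Matrix.fromBlocks (1 : Matrix (Fin p) (Fin p) ℝ) 0
      (Qseq n) (Rseq n)) atTop (𝓝 (Matrix.fromBlocks 1 0 Qstar 0)) := by
    have hcont : Continuous (fun x : (Matrix (Fin q) (Fin p) ℝ) × (Matrix (Fin q) (Fin q) ℝ) =>
        Matrix.fromBlocks (1 : Matrix (Fin p) (Fin p) ℝ) 0 x.1 x.2) :=
      Continuous.matrix_fromBlocks continuous_const continuous_const continuous_fst continuous_snd
    have := (hcont.tendsto (Qstar, 0)).comp (hQt.prodMk_nhds hRseq_tendsto)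
    exact this
  have hmain : Tendsto P atTop (𝓝 (Matrix.fromBlocks 1 0 Qstar 0)) := by
    have hTT : Tendsto (fun T => T - t) atTop atTop := tendsto_sub_atTop_nat t
    have hcomp := hfb.comp hTT
    apply hcomp.congr'
    filter_upwards [eventually_ge_atTop t] with T hT
    have hTeq : T = t + (T - t) := by omega
    show Matrix.fromBlocks 1 0 (Qseq (T - t)) (Rseq (T - t)) = P T
    conv_rhs => rw [hTeq]
    rw [hProd (T - t)]
  obtain ⟨hEq, hGe⟩ := norm_fromBlocks_eq hp hq Qstar
  refine ⟨hmain, ?_, hGe⟩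
  have h2 : Tendsto (fun T => ‖P T‖) atTop (𝓝 ‖Matrix.fromBlocks 1 0 Qstar 0‖) := hmain.norm
  rw [hEq] at h2
  exact h2
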